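/- A scoring play game is G = {G^L | G^S | G^R} with G^L, G^R finite sets of scoring games and G^S ∈ ℤ, and left/right final scores defined recursively by: if G^L = ∅ then G_F^{SL} = G^S else G_F^{SL} = max_{g ∈ G^L} g_F^{SR}, and symmetrically if G^R = ∅ then G_F^{SR} = G^S else G_F^{SR} = min_{g ∈ G^R} g_F^{SL}. Disjunctive sum: G +ℓ H has left options {g +ℓ H : g ∈ G^L} ∪ {G +ℓ h : h ∈ H^L}, right options symmetrically, and score G^S + H^S. Let G = {2, {1|2|3} | 0 | -2, {-3|-2|-1}} where numbers a abbreviate the game {∅ | a | ∅}. Then (G +ℓ G)_F^{SL} < 0 and (G +ℓ G)_F^{SR} > 0; i.e., G +ℓ G is a previous-player (P-position) game and in particular is not equivalent to the zero game 0 = {∅|0|∅}. -/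

import Mathlib

inductive SGame : Type where
  | mk (L : List SGame) (s : ℤ) (R : List SGame) : SGame

namespace SGame

mutual
  def leftScore : SGame → ℤ
    | mk L s _ => ((L.attach.map fun x => rightScore x.1).max?).getD s
  termination_by g => sizeOf g
  decreasing_by
    obtain ⟨g, hg⟩ := x
    have := List.sizeOf_lt_of_mem hg
    simp only [SGame.mk.sizeOf_spec]
    omega
  def rightScore : SGame → ℤ
    | mk _ s R => ((R.attach.map fun x => leftScore x.1).min?).getD s
  termination_by g => sizeOf g
  decreasing_by
    obtain ⟨g, hg⟩ := x
    have := List.sizeOf_lt_of_mem hg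
    simp only [SGame.mk.sizeOf_spec]
    omega
end

/-- The ended game with score `a`. -/
def num (a : ℤ) : SGame := mk [] a []

def add : SGame → SGame → SGame
  | mk L1 s1 R1, mk L2 s2 R2 =>
    mk ((L1.attach.map fun x => add x.1 (mk L2 s2 R2)) ++
        (L2.attach.map fun y => add (mk L1 s1 R1) y.1))
       (s1 + s2)
       ((R1.attach.map fun x => add x.1 (mk L2 s2 R2)) ++
        (R2.attach.map fun y => add (mk L1 s1 R1) y.1))
termination_by G H => sizeOf G + sizeOf H
decreasing_by
  all_goals first
    | (obtain ⟨g, hg⟩ := x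
       have := List.sizeOf_lt_of_mem hg
       simp only [SGame.mk.sizeOf_spec] at *
       omega)
    | (obtain ⟨g, hg⟩ := y
       have := List.sizeOf_lt_of_mem hg
       simp only [SGame.mk.sizeOf_spec] at *
       omega)

end SGame

/-- The game `G = {2, {1|2|3} | 0 | -2, {-3|-2|-1}}` from the paper. -/
def Gex : SGame :=
  SGame.mk [SGame.num 2, SGame.mk [SGame.num 1] 2 [SGame.num 3]] 0
    [SGame.num (-2), SGame.mk [SGame.num (-3)] (-2) [SGame.num (-1)]]

theorem stmt_14 :
    (Gex.add Gex).leftScore < 0 ∧ (Gex.add Gex).rightScore > 0 := by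
  constructor <;>
  · simp only [Gex, SGame.num, SGame.add, SGame.leftScore, SGame.rightScore,
      List.attach, List.attachWith, List.pmap, List.map, List.append_eq,
      List.cons_append, List.nil_append,
      List.max?, List.min?, List.foldl, Option.getD]
    decide
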